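/- For z > 0 define φ(z) = (exp(z/2) − 1)²/z. Then φ is strictly increasing on (0, ∞). Equivalently, in terms of M = exp(z) > 1, the per-bit amplifier-power factor ((√M − 1)²)/ln(M) is strictly increasing in M for M > 1. -/

import Mathlib

open Real

lemma amp_aux_first :
    StrictMonoOn (fun z : ℝ => (Real.exp (z / 2) - 1) ^ 2 / z) (Set.Ioi 0) := by
  apply strictMonoOn_of_deriv_pos (convex_Ioi 0)
  · apply ContinuousOn.div
    · fun_prop
    · fun_prop
    · intro z hz; exact ne_of_gt hz
  · intro z hz
    rw [interior_Ioi] at hz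
    have hz0 : (0:ℝ) < z := hz
    have he : HasDerivAt (fun z : ℝ => Real.exp (z / 2)) (Real.exp (z / 2) * (1 / 2)) z := by
      have := (Real.hasDerivAt_exp (z / 2)).comp z ((hasDerivAt_id z).div_const 2)
      exact this
    have h2 : HasDerivAt (fun z : ℝ => (Real.exp (z / 2) - 1) ^ 2)
        ((Real.exp (z / 2) - 1) * Real.exp (z / 2)) z := by
      have := ((he.sub_const 1).pow 2)
      refine this.congr_deriv ?_
      ring
    have hd : HasDerivAt (fun z : ℝ => (Real.exp (z / 2) - 1) ^ 2 / z)
        (((Real.exp (z / 2) - 1) * Real.exp (z / 2) * z - (Real.exp (z / 2) - 1) ^ 2 * 1) / z ^ 2)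
        z := h2.div (hasDerivAt_id z) (ne_of_gt hz0)
    rw [hd.deriv]
    have ha1 : 1 < Real.exp (z / 2) := by
      rw [show (1:ℝ) = Real.exp 0 by simp]
      exact Real.exp_lt_exp.mpr (by linarith)
    have hkey : -(z / 2) + 1 < Real.exp (-(z / 2)) :=
      Real.add_one_lt_exp (by linarith)
    have hmul : Real.exp (-(z / 2)) * Real.exp (z / 2) = 1 := by
      rw [← Real.exp_add]; simp
    set a := Real.exp (z / 2) with ha
    have hnum : 0 < (a - 1) * a * z - (a - 1) ^ 2 * 1 := by
      nlinarith [mul_pos (sub_pos.mpr ha1) hz0]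
    positivity

/-- `φ(z) = (exp(z/2) − 1)²/z` is strictly increasing on `(0,∞)`; equivalently
`M ↦ (√M − 1)²/ln M` is strictly increasing on `(1,∞)`. -/
theorem amp_power_factor_strictMono :
    StrictMonoOn (fun z : ℝ => (Real.exp (z / 2) - 1) ^ 2 / z) (Set.Ioi 0) ∧
    StrictMonoOn (fun M : ℝ => (Real.sqrt M - 1) ^ 2 / Real.log M) (Set.Ioi 1) := by
  refine ⟨amp_aux_first, ?_⟩
  intro M1 hM1 M2 hM2 hlt
  simp only [Set.mem_Ioi] at hM1 hM2
  have h1 : (0:ℝ) < Real.log M1 := Real.log_pos hM1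
  have h2 : (0:ℝ) < Real.log M2 := Real.log_pos hM2
  have hs1 : Real.sqrt M1 = Real.exp (Real.log M1 / 2) := by
    rw [Real.sqrt_eq_rpow, Real.rpow_def_of_pos (by linarith)]
    ring_nf
  have hs2 : Real.sqrt M2 = Real.exp (Real.log M2 / 2) := by
    rw [Real.sqrt_eq_rpow, Real.rpow_def_of_pos (by linarith)]
    ring_nf
  have := amp_aux_first (Set.mem_Ioi.mpr h1) (Set.mem_Ioi.mpr h2)
    (Real.log_lt_log (by linarith) hlt)
  simpa [hs1, hs2] using this
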